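/- Let Φ_n be Schaeffer's bijection from well-labeled trees with n edges to rooted quadrangulations with n faces, and let (τ, U) ∈ 𝒲⁺_n with contour exploration sequence v_0,…,v_{2n}. The quadrangulation Φ_n(τ, U) has no vertex of degree 1 if and only if: (i) for every leaf v of τ with adjacent vertex w, U(v) = U(w) − 1; and (ii) there exists i ∈ {1,…,2n−1} with U(v_i) = 0. -/

import Mathlib

/-- A plane tree: a finite set of finite sequences of positive integers (here modelled as
lists of naturals with entries `≥ 1`), containing the root `[]`, closed under taking parents
(dropping the last coordinate), and such that the children of `u` present in the tree
are exactly `u ++ [j]` for `1 ≤ j ≤ k_u`. -/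
structure PlaneTree where
  verts : Finset (List ℕ)
  root_mem : ([] : List ℕ) ∈ verts
  parent_mem : ∀ v ∈ verts, v ≠ ([] : List ℕ) → v.dropLast ∈ verts
  children : ∀ u ∈ verts, ∃ k : ℕ, ∀ j : ℕ, (u ++ [j]) ∈ verts ↔ 1 ≤ j ∧ j ≤ k

/-- The number of children `k_u(τ)` of a vertex `u` in the plane tree `τ`. -/
def PlaneTree.numChildren (τ : PlaneTree) (u : List ℕ) : ℕ :=
  (τ.verts.filter (fun v => v ≠ [] ∧ v.dropLast = u)).card

/-- The set of edges of `τ`: pairs `(π(v), v)` for `v ∈ τ \ {∅}`. -/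
def PlaneTree.edges (τ : PlaneTree) : Finset (List ℕ × List ℕ) :=
  (τ.verts.erase []).image (fun v => (v.dropLast, v))

/-- The set `∂τ` of leaves of `τ` different from the root. -/
def PlaneTree.leaves (τ : PlaneTree) : Finset (List ℕ) :=
  τ.verts.filter (fun v => v ≠ [] ∧ τ.numChildren v = 0)

open scoped Classical
lemma discrete_ivt (f : ℕ → ℤ) (hf : ∀ i, |f (i+1) - f i| ≤ 1) (c : ℤ) :
    ∀ b a, a ≤ b → c ≤ f a → f b ≤ c → ∃ j, a ≤ j ∧ j ≤ b ∧ f j = c := by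
  intro b
  induction b with
  | zero =>
    intro a ha h1 h2
    interval_cases a
    exact ⟨0, le_rfl, le_rfl, le_antisymm h2 h1⟩
  | succ b ih =>
    intro a ha h1 h2
    by_cases h : f (b+1) = c
    · exact ⟨b+1, ha, le_rfl, h⟩
    · have hlt : f (b+1) < c := lt_of_le_of_ne h2 h
      have ha' : a ≤ b := by
        rcases Nat.lt_or_ge a (b+1) with h' | h'
        · omega
        · exfalso; have : a = b + 1 := le_antisymm ha h'
          rw [this] at h1; exact absurd h1 (not_le.mpr hlt)
      have hb : f b ≤ c := by
        have := abs_le.mp (hf b)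
        omega
      obtain ⟨j, hj1, hj2, hj3⟩ := ih a ha' h1 hb
      exact ⟨j, hj1, le_trans hj2 (Nat.le_succ b), hj3⟩

lemma mem_append_iff' (τ : PlaneTree) (u : List ℕ) (hu : u ∈ τ.verts) (j : ℕ) :
    (u ++ [j]) ∈ τ.verts ↔ 1 ≤ j ∧ j ≤ τ.numChildren u := by
  obtain ⟨k, hk⟩ := τ.children u hu
  suffices h : τ.numChildren u = k by rw [h]; exact hk j
  unfold PlaneTree.numChildren
  have himg : τ.verts.filter (fun v => v ≠ [] ∧ v.dropLast = u)
      = (Finset.Icc 1 k).image (fun j => u ++ [j]) := by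
    ext x
    simp only [Finset.mem_filter, Finset.mem_image, Finset.mem_Icc]
    constructor
    · rintro ⟨hx, hne, hd⟩
      have hx' : x = u ++ [x.getLast hne] := by
        conv_lhs => rw [← List.dropLast_append_getLast hne, hd]
      rw [hx'] at hx
      obtain ⟨h1, h2⟩ := (hk _).mp hx
      exact ⟨x.getLast hne, ⟨h1, h2⟩, hx'.symm⟩
    · rintro ⟨j, ⟨h1, h2⟩, rfl⟩
      exact ⟨(hk j).mpr ⟨h1, h2⟩, by simp, List.dropLast_concat⟩
  rw [himg, Finset.card_image_of_injective _ (fun a b h => by simpa using h)]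
  simp


/-- The successor of a corner `i` in Schaeffer's construction:
`succ(i) = min{ j ≥ i : U(v_j) = U(v_i) − 1 }` (the contour sequence `v` being extended
periodically). -/
noncomputable def succCorner (U : List ℕ → ℤ) (v : ℕ → List ℕ) (i : ℕ) : ℕ :=
  sInf {j : ℕ | i ≤ j ∧ U (v j) = U (v i) - 1}

/-- The arcs of Schaeffer's construction: the corner `i` (with vertex `v_i`) is joined to the
extra vertex `∂` (encoded by `none`) if `U(v_i) = 0`, and to the corner `succ(i)` otherwise. -/
noncomputable def cornerEdge (U : List ℕ → ℤ) (v : ℕ → List ℕ) (i : ℕ) :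
    Option (List ℕ) × Option (List ℕ) :=
  (some (v i), if U (v i) = 0 then none else some (v (succCorner U v i)))

/-- The graph of the quadrangulation `Φ_n(τ, U)` built by Schaeffer's bijection: its vertices
are the vertices of the tree together with `∂` (encoded by `none`), two vertices being
adjacent when some arc of the construction joins them. -/
noncomputable def schaefferGraph (n : ℕ) (U : List ℕ → ℤ) (v : ℕ → List ℕ) :
    SimpleGraph (Option (List ℕ)) where
  Adj x y := x ≠ y ∧ ∃ i < 2 * n, cornerEdge U v i = (x, y) ∨ cornerEdge U v i = (y, x)
  symm := ⟨by
    rintro x y ⟨hne, i, hi, h⟩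
    exact ⟨hne.symm, i, hi, h.symm⟩⟩
  loopless := ⟨fun x h => h.1 rfl⟩

/-- The degree, in the quadrangulation `Φ_n(τ, U)`, of a vertex `x` of the tree: the number
of arcs starting from a corner of `x`, plus the number of arcs arriving at a corner of `x`. -/
noncomputable def degTree (n : ℕ) (U : List ℕ → ℤ) (v : ℕ → List ℕ) (x : List ℕ) : ℕ :=
  ((Finset.range (2 * n)).filter (fun i => v i = x)).card +
    ((Finset.range (2 * n)).filter
      (fun i => U (v i) ≠ 0 ∧ v (succCorner U v i) = x)).card

/-- The degree, in the quadrangulation `Φ_n(τ, U)`, of the extra root vertex `∂`: the number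
of corners of the tree with label `0`. -/
noncomputable def degRoot (n : ℕ) (U : List ℕ → ℤ) (v : ℕ → List ℕ) : ℕ :=
  ((Finset.range (2 * n)).filter (fun i => U (v i) = 0)).card

/-- Proposition 2.2: the quadrangulation `Φ_n(τ, U)` obtained from a well-labeled tree with
`n` edges via Schaeffer's bijection is nice (every vertex has degree `≥ 2`) if and only if
(i) for every leaf `v` of `τ` with adjacent vertex `w` one has `U(v) = U(w) − 1`
(for the root `∅`, a leaf when `k_∅ = 1`, the adjacent vertex is its unique child `[1]`), and
(ii) there exists `i ∈ {1, …, 2n−1}` with `U(v_i) = 0`. -/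
lemma eq_singleton_of_dropLast_nil {x : List ℕ} (hne : x ≠ []) (hd : x.dropLast = []) :
    ∃ a, x = [a] := by
  cases x with
  | nil => exact absurd rfl hne
  | cons a t =>
    cases t with
    | nil => exact ⟨a, rfl⟩
    | cons b t' => simp [List.dropLast] at hd

theorem stmt_12 (n : ℕ) (hn : 1 ≤ n) (τ : PlaneTree) (hcard : τ.verts.card = n + 1)
    (v : ℕ → List ℕ) (hv0 : v 0 = []) (hper : ∀ i, v (i + 2 * n) = v i)
    (hmem : ∀ i, v i ∈ τ.verts)
    (hstep : ∀ i, ((v (i + 1)).dropLast = v i ∧ v (i + 1) ≠ []) ∨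
      ((v i).dropLast = v (i + 1) ∧ v i ≠ []))
    (hsurj : ∀ w ∈ τ.verts, ∃ i < 2 * n, v i = w)
    (hcount : ∀ w ∈ τ.verts, ((Finset.range (2 * n)).filter (fun i => v i = w)).card
      = τ.numChildren w + (if w = [] then 0 else 1))
    (U : List ℕ → ℤ) (hU0 : U [] = 0)
    (hinc : ∀ w ∈ τ.verts, w ≠ [] → |U w - U w.dropLast| ≤ 1)
    (hpos : ∀ w ∈ τ.verts, 0 ≤ U w) :
    (2 ≤ degRoot n U v ∧ ∀ x ∈ τ.verts, 2 ≤ degTree n U v x) ↔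
      (((∀ x ∈ τ.verts, x ≠ [] → τ.numChildren x = 0 → U x = U x.dropLast - 1) ∧
        (τ.numChildren [] = 1 → U [1] = 1)) ∧
       (∃ i : ℕ, 1 ≤ i ∧ i ≤ 2 * n - 1 ∧ U (v i) = 0)) := by
  have hnpos : 0 < 2 * n := by omega
  have hstep' : ∀ i, |U (v (i + 1)) - U (v i)| ≤ 1 := by
    intro i
    rcases hstep i with ⟨hd, hne⟩ | ⟨hd, hne⟩
    · have h := hinc (v (i + 1)) (hmem _) hne
      rwa [hd] at h
    · have h := hinc (v i) (hmem _) hne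
      rw [hd] at h
      rwa [abs_sub_comm]
  have ivt' : ∀ (c : ℤ) (b a : ℕ), a ≤ b → c ≤ U (v a) → U (v b) ≤ c →
      ∃ j, a ≤ j ∧ j ≤ b ∧ U (v j) = c := by
    intro c b a h1 h2 h3
    exact discrete_ivt (fun i => U (v i)) hstep' c b a h1 h2 h3
  have hv2n : v (2 * n) = [] := by
    have h := hper 0
    rw [zero_add] at h
    rw [h, hv0]
  have hU2n : U (v (2 * n)) = 0 := by rw [hv2n, hU0]
  have hUv0 : U (v 0) = 0 := by rw [hv0, hU0]
  have hprev : ∀ x : List ℕ, τ.numChildren x = 0 → ∀ j, v (j + 1) = x →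
      v j = x.dropLast := by
    intro x h0 j hj
    have h0' : τ.verts.filter (fun y => y ≠ [] ∧ y.dropLast = x) = ∅ :=
      Finset.card_eq_zero.mp h0
    rcases hstep j with ⟨hd, hne⟩ | ⟨hd, hne⟩
    · rw [hj] at hd
      exact hd.symm
    · exfalso
      have hmemj : v j ∈ τ.verts.filter (fun y => y ≠ [] ∧ y.dropLast = x) :=
        Finset.mem_filter.mpr ⟨hmem j, hne, by rw [hd, hj]⟩
      rw [h0'] at hmemj
      simp at hmemj
  have hmem1 : 1 ≤ τ.numChildren [] → [1] ∈ τ.verts := by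
    intro hk
    have := (mem_append_iff' τ [] τ.root_mem 1).mpr ⟨le_rfl, hk⟩
    simpa using this
  have hUval1 : 1 ≤ τ.numChildren [] → 0 ≤ U [1] ∧ U [1] ≤ 1 := by
    intro hk
    have hm := hmem1 hk
    have h1 := hpos [1] hm
    have h2 := hinc [1] hm (by simp)
    simp [hU0] at h2
    have := abs_le.mp h2
    omega
  have hv2n1 : τ.numChildren [] = 1 → v (2 * n - 1) = [1] := by
    intro hk1
    have h2n : 2 * n - 1 + 1 = 2 * n := by omega
    rcases hstep (2 * n - 1) with ⟨hd, hne⟩ | ⟨hd, hne⟩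
    · rw [h2n] at hne
      exact absurd hv2n hne
    · rw [h2n, hv2n] at hd
      obtain ⟨a, ha⟩ := eq_singleton_of_dropLast_nil hne hd
      have hma : ([] ++ [a]) ∈ τ.verts := by
        rw [List.nil_append, ← ha]
        exact hmem _
      have := (mem_append_iff' τ [] τ.root_mem a).mp hma
      rw [hk1] at this
      have haa : a = 1 := by omega
      rw [ha, haa]
  have huniq : τ.numChildren [] = 1 → ∀ m, m < 2 * n → v m = [] → m = 0 := by
    intro hk1 m hm hvm
    have hcroot := hcount [] τ.root_mem
    rw [hk1, if_pos rfl] at hcroot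
    obtain ⟨a, hfa⟩ := Finset.card_eq_one.mp hcroot
    have h1 : (0 : ℕ) ∈ ({a} : Finset ℕ) := by
      rw [← hfa]
      exact Finset.mem_filter.mpr ⟨Finset.mem_range.mpr hnpos, hv0⟩
    have h2 : m ∈ ({a} : Finset ℕ) := by
      rw [← hfa]
      exact Finset.mem_filter.mpr ⟨Finset.mem_range.mpr hm, hvm⟩
    simp at h1 h2
    omega
  have leafArcIn : ∀ x ∈ τ.verts, x ≠ [] → τ.numChildren x = 0 →
      U x = U x.dropLast - 1 → 2 ≤ degTree n U v x := by
    intro x hx hne h0 hUx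
    obtain ⟨j, hj2n, hjx⟩ := hsurj x hx
    have hj0 : j ≠ 0 := fun h => hne (by rw [← hjx, h, hv0])
    have hj1 : 1 ≤ j := Nat.one_le_iff_ne_zero.mpr hj0
    have hprevj : v (j - 1) = x.dropLast :=
      hprev x h0 (j - 1) (by rw [Nat.sub_add_cancel hj1, hjx])
    have hUxpos := hpos x hx
    have hUw : U (v (j - 1)) = U x + 1 := by rw [hprevj]; omega
    have hUwne : U (v (j - 1)) ≠ 0 := by omega
    have hsc : succCorner U v (j - 1)
        = sInf {m : ℕ | j - 1 ≤ m ∧ U (v m) = U (v (j - 1)) - 1} := rfl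
    have hjS : j ∈ {m : ℕ | j - 1 ≤ m ∧ U (v m) = U (v (j - 1)) - 1} :=
      ⟨by omega, by rw [hjx, hUw]; ring⟩
    have hsucc : succCorner U v (j - 1) = j := by
      rw [hsc]
      apply le_antisymm (Nat.sInf_le hjS)
      obtain ⟨ha, hb⟩ := Nat.sInf_mem ⟨j, hjS⟩
      by_contra hlt
      push_neg at hlt
      have heq : sInf {m : ℕ | j - 1 ≤ m ∧ U (v m) = U (v (j - 1)) - 1} = j - 1 := by omega
      rw [heq] at hb
      omega
    have hAcard : 1 ≤ ((Finset.range (2 * n)).filter (fun i => v i = x)).card :=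
      Finset.card_pos.mpr ⟨j, Finset.mem_filter.mpr ⟨Finset.mem_range.mpr hj2n, hjx⟩⟩
    have hBcard : 1 ≤ ((Finset.range (2 * n)).filter
        (fun i => U (v i) ≠ 0 ∧ v (succCorner U v i) = x)).card :=
      Finset.card_pos.mpr ⟨j - 1, Finset.mem_filter.mpr
        ⟨Finset.mem_range.mpr (by omega), hUwne, by rw [hsucc, hjx]⟩⟩
    unfold degTree
    omega
  have leafNoArc : ∀ x ∈ τ.verts, x ≠ [] → τ.numChildren x = 0 →
      U x ≠ U x.dropLast - 1 → ∀ i, U (v i) ≠ 0 → v (succCorner U v i) ≠ x := by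
    intro x hx hne h0 hUx i hUi hcon
    have hsc : succCorner U v i
        = sInf {m : ℕ | i ≤ m ∧ U (v m) = U (v i) - 1} := rfl
    rw [hsc] at hcon
    have hSne : ({m : ℕ | i ≤ m ∧ U (v m) = U (v i) - 1}).Nonempty := by
      by_contra hemp
      rw [Set.not_nonempty_iff_eq_empty] at hemp
      rw [hemp, Nat.sInf_empty, hv0] at hcon
      exact hne hcon.symm
    obtain ⟨his, hUs⟩ := Nat.sInf_mem hSne
    have hUsx : U x = U (v i) - 1 := by rw [← hcon]; exact hUs
    have hne1 : i ≠ sInf {m : ℕ | i ≤ m ∧ U (v m) = U (v i) - 1} := by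
      intro h
      rw [← h] at hUs
      omega
    have hsi : i < sInf {m : ℕ | i ≤ m ∧ U (v m) = U (v i) - 1} :=
      lt_of_le_of_ne his hne1
    have hnotmem : sInf {m : ℕ | i ≤ m ∧ U (v m) = U (v i) - 1} - 1
        ∉ {m : ℕ | i ≤ m ∧ U (v m) = U (v i) - 1} :=
      Nat.notMem_of_lt_sInf (by omega)
    have hprevS : v (sInf {m : ℕ | i ≤ m ∧ U (v m) = U (v i) - 1} - 1) = x.dropLast :=
      hprev x h0 _ (by rw [Nat.sub_add_cancel (by omega), hcon])
    have hUwne : U x.dropLast ≠ U (v i) - 1 := by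
      intro h
      exact hnotmem ⟨by omega, by rw [hprevS, h]⟩
    have habs := abs_le.mp (hinc x hx hne)
    have hUxw : U x = U x.dropLast + 1 := by omega
    obtain ⟨m, hm1, hm2, hm3⟩ := ivt' (U (v i) - 1)
      (sInf {m : ℕ | i ≤ m ∧ U (v m) = U (v i) - 1} - 1) i (by omega)
      (by omega) (by rw [hprevS]; omega)
    have hmS : m ∈ {m : ℕ | i ≤ m ∧ U (v m) = U (v i) - 1} := ⟨hm1, hm3⟩
    have := Nat.sInf_le hmS
    omega
  have rootNoArc : τ.numChildren [] = 1 → U [1] ≠ 1 →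
      ∀ i, i < 2 * n → U (v i) ≠ 0 → v (succCorner U v i) ≠ [] := by
    intro hk1 hU1 i hi hUi hcon
    have hU1' : U [1] = 0 := by
      have := hUval1 (by omega)
      omega
    have hUipos : 1 ≤ U (v i) := by
      have := hpos (v i) (hmem i)
      omega
    have hine0 : i ≠ 0 := fun h => hUi (by rw [h, hUv0])
    have hsc : succCorner U v i
        = sInf {m : ℕ | i ≤ m ∧ U (v m) = U (v i) - 1} := rfl
    rw [hsc] at hcon
    obtain ⟨m, hm1, hm2, hm3⟩ := ivt' (U (v i) - 1) (2 * n) i (le_of_lt hi)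
      (by omega) (by omega)
    have hmS : m ∈ {m : ℕ | i ≤ m ∧ U (v m) = U (v i) - 1} := ⟨hm1, hm3⟩
    have hSle : sInf {m : ℕ | i ≤ m ∧ U (v m) = U (v i) - 1} ≤ 2 * n :=
      le_trans (Nat.sInf_le hmS) hm2
    obtain ⟨his, hUs⟩ := Nat.sInf_mem ⟨m, hmS⟩
    have hs2n : sInf {m : ℕ | i ≤ m ∧ U (v m) = U (v i) - 1} = 2 * n := by
      by_contra h
      have hlt : sInf {m : ℕ | i ≤ m ∧ U (v m) = U (v i) - 1} < 2 * n :=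
        lt_of_le_of_ne hSle h
      have := huniq hk1 _ hlt hcon
      omega
    have hUi1 : U (v i) = 1 := by
      rw [hs2n, hU2n] at hUs
      omega
    have h2n1 : 2 * n - 1 ∈ {m : ℕ | i ≤ m ∧ U (v m) = U (v i) - 1} :=
      ⟨by omega, by rw [hv2n1 hk1, hU1', hUi1]; ring⟩
    have := Nat.sInf_le h2n1
    omega
  have rootArcIn : τ.numChildren [] = 1 → U [1] = 1 → 2 ≤ degTree n U v [] := by
    intro hk1 hU1
    have hUv2n1 : U (v (2 * n - 1)) = 1 := by rw [hv2n1 hk1, hU1]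
    have hsc : succCorner U v (2 * n - 1)
        = sInf {m : ℕ | 2 * n - 1 ≤ m ∧ U (v m) = U (v (2 * n - 1)) - 1} := rfl
    have h2nS : 2 * n ∈ {m : ℕ | 2 * n - 1 ≤ m ∧ U (v m) = U (v (2 * n - 1)) - 1} :=
      ⟨by omega, by rw [hU2n, hUv2n1]; ring⟩
    have hsucc : succCorner U v (2 * n - 1) = 2 * n := by
      rw [hsc]
      apply le_antisymm (Nat.sInf_le h2nS)
      obtain ⟨ha, hb⟩ := Nat.sInf_mem ⟨_, h2nS⟩
      by_contra hlt
      push_neg at hlt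
      have heq : sInf {m : ℕ | 2 * n - 1 ≤ m ∧ U (v m) = U (v (2 * n - 1)) - 1}
          = 2 * n - 1 := by omega
      rw [heq] at hb
      omega
    have hAcard : 1 ≤ ((Finset.range (2 * n)).filter (fun i => v i = ([] : List ℕ))).card :=
      Finset.card_pos.mpr ⟨0, Finset.mem_filter.mpr ⟨Finset.mem_range.mpr hnpos, hv0⟩⟩
    have hBcard : 1 ≤ ((Finset.range (2 * n)).filter
        (fun i => U (v i) ≠ 0 ∧ v (succCorner U v i) = ([] : List ℕ))).card :=
      Finset.card_pos.mpr ⟨2 * n - 1, Finset.mem_filter.mpr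
        ⟨Finset.mem_range.mpr (by omega), by rw [hUv2n1]; norm_num, by rw [hsucc, hv2n]⟩⟩
    unfold degTree
    omega
  have hk0 : 1 ≤ τ.numChildren [] := by
    rcases hstep 0 with ⟨hd, hne⟩ | ⟨hd, hne⟩
    · rw [hv0] at hd
      exact Finset.card_pos.mpr ⟨v 1, Finset.mem_filter.mpr ⟨hmem 1, hne, hd⟩⟩
    · exact absurd hv0 hne
  constructor
  · rintro ⟨hroot, htree⟩
    refine ⟨⟨?_, ?_⟩, ?_⟩
    · intro x hx hxne h0
      by_contra hUx
      have h2 := htree x hx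
      have hB : ((Finset.range (2 * n)).filter
          (fun i => U (v i) ≠ 0 ∧ v (succCorner U v i) = x)) = ∅ := by
        apply Finset.filter_eq_empty_iff.mpr
        intro i _
        rintro ⟨h1', h2'⟩
        exact leafNoArc x hx hxne h0 hUx i h1' h2'
      unfold degTree at h2
      rw [hcount x hx, h0, if_neg hxne, hB, Finset.card_empty] at h2
      omega
    · intro hk1
      by_contra hU1
      have h2 := htree [] τ.root_mem
      have hB : ((Finset.range (2 * n)).filter
          (fun i => U (v i) ≠ 0 ∧ v (succCorner U v i) = ([] : List ℕ))) = ∅ := by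
        apply Finset.filter_eq_empty_iff.mpr
        intro i hi
        rintro ⟨h1', h2'⟩
        exact rootNoArc hk1 hU1 i (Finset.mem_range.mp hi) h1' h2'
      unfold degTree at h2
      rw [hcount [] τ.root_mem, hk1, if_pos rfl, hB, Finset.card_empty] at h2
      omega
    · by_contra hno
      push_neg at hno
      unfold degRoot at hroot
      have hsub : (Finset.range (2 * n)).filter (fun i => U (v i) = 0) ⊆ {0} := by
        intro m hm
        obtain ⟨hm1, hm2⟩ := Finset.mem_filter.mp hm
        have hm1' := Finset.mem_range.mp hm1
        rw [Finset.mem_singleton]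
        by_contra hm0
        exact hno m (by omega) (by omega) hm2
      have := Finset.card_le_card hsub
      simp at this
      omega
  · rintro ⟨⟨hleaf, hrootleaf⟩, i, hi1, hi2, hUi⟩
    constructor
    · unfold degRoot
      have h0m : (0 : ℕ) ∈ (Finset.range (2 * n)).filter (fun i => U (v i) = 0) :=
        Finset.mem_filter.mpr ⟨Finset.mem_range.mpr hnpos, hUv0⟩
      have him : i ∈ (Finset.range (2 * n)).filter (fun i => U (v i) = 0) :=
        Finset.mem_filter.mpr ⟨Finset.mem_range.mpr (by omega), hUi⟩
      exact Finset.one_lt_card.mpr ⟨0, h0m, i, him, by omega⟩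
    · intro x hx
      by_cases hxnil : x = []
      · subst hxnil
        rcases Nat.lt_or_ge (τ.numChildren []) 2 with hk | hk
        · have hk1 : τ.numChildren [] = 1 := by omega
          exact rootArcIn hk1 (hrootleaf hk1)
        · unfold degTree
          rw [hcount [] hx, if_pos rfl]
          omega
      · rcases Nat.eq_zero_or_pos (τ.numChildren x) with h0 | h0
        · exact leafArcIn x hx hxnil h0 (hleaf x hx hxnil h0)
        · unfold degTree
          rw [hcount x hx, if_neg hxnil]
          omega
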